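/- arXiv:2601.17960 — 3 statements merged into one kernel-verified Lean document; each statement's English description precedes it below -/
import Mathlib

section
/- Let C, C' be finite types and d, d' finite types (dimensions), and let N : (C → Matrix d d ℂ) →ₗ[ℂ] (C' → Matrix d' d' ℂ) be a linear map such that (i) whenever ρ c is positive semidefinite for every c, (N ρ) c' is positive semidefinite for every c', and (ii) ∑ c', ((N ρ) c').trace = ∑ c, (ρ c).trace for every ρ. Then for every family ρ : C → Matrix d d ℂ with every ρ c Hermitian, ∑ c', ‖(N ρ) c'‖₁ ≤ ∑ c, ‖ρ c‖₁. -/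
open scoped ComplexOrder

/-- The trace norm `‖A‖₁` of a complex matrix `A`: the trace of the positive
semidefinite square root of `Aᴴ * A`. -/
noncomputable def traceNorm {n : Type*} [Fintype n] [DecidableEq n] (A : Matrix n n ℂ) : ℝ :=
  (((Matrix.posSemidef_conjTranspose_mul_self A).1.eigenvectorUnitary : Matrix n n ℂ) *
    Matrix.diagonal (((↑) : ℝ → ℂ) ∘ (Real.sqrt ·) ∘ (Matrix.posSemidef_conjTranspose_mul_self A).1.eigenvalues) *
    (star (Matrix.posSemidef_conjTranspose_mul_self A).1.eigenvectorUnitary : Matrix n n ℂ)).trace.re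

namespace CqAux

open Matrix
open scoped MatrixOrder

variable {n : Type*} [Fintype n] [DecidableEq n]

lemma psd_trace_re_nonneg {X : Matrix n n ℂ} (hX : X.PosSemidef) : 0 ≤ X.trace.re := by
  have h : ∀ i, 0 ≤ X i i := by
    intro i
    exact hX.diag_nonneg
  rw [Matrix.trace, Complex.re_sum]
  exact Finset.sum_nonneg fun i _ => by
    simpa using (Complex.le_def.mp (h i)).1

lemma trace_mul_re_nonneg {X Y : Matrix n n ℂ} (hX : X.PosSemidef) (hY : Y.PosSemidef) :
    0 ≤ ((X * Y).trace).re := by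
  have hB := (CFC.sqrt_nonneg X).posSemidef
  have h1 : (X * Y).trace = (CFC.sqrt X * Y * CFC.sqrt X).trace := by
    conv_lhs => rw [← CFC.sqrt_mul_sqrt_self X hX.nonneg]
    rw [mul_assoc, Matrix.trace_mul_comm]
  have h2 : (CFC.sqrt X * Y * CFC.sqrt X).PosSemidef := by
    have := hY.mul_mul_conjTranspose_same (CFC.sqrt X)
    rwa [hB.1] at this
  rw [h1]
  exact psd_trace_re_nonneg h2

variable {A : Matrix n n ℂ}

/-- Conjugation of a real diagonal matrix by the eigenvector unitary of `A`. -/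
noncomputable def conjDiag (hA : A.IsHermitian) (f : n → ℝ) : Matrix n n ℂ :=
  (hA.eigenvectorUnitary : Matrix n n ℂ) * diagonal (fun i => (f i : ℂ)) *
    star (hA.eigenvectorUnitary : Matrix n n ℂ)

lemma conjDiag_mul (hA : A.IsHermitian) (f g : n → ℝ) :
    conjDiag hA f * conjDiag hA g = conjDiag hA (fun i => f i * g i) := by
  unfold conjDiag
  set U : Matrix n n ℂ := (hA.eigenvectorUnitary : Matrix n n ℂ) with hU
  have h : star U * U = 1 := mem_unitaryGroup_iff'.mp (hA.eigenvectorUnitary).2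
  calc U * diagonal (fun i => (f i : ℂ)) * star U * (U * diagonal (fun i => (g i : ℂ)) * star U)
      = U * diagonal (fun i => (f i : ℂ)) * (star U * U) * diagonal (fun i => (g i : ℂ)) * star U := by
        simp only [mul_assoc]
    _ = U * (diagonal (fun i => (f i : ℂ)) * diagonal (fun i => (g i : ℂ))) * star U := by
        rw [h, mul_one]; simp only [mul_assoc]
    _ = U * diagonal (fun i => (((fun i => f i * g i) i : ℝ) : ℂ)) * star U := by
        rw [Matrix.diagonal_mul_diagonal]; norm_cast

lemma conjDiag_posSemidef (hA : A.IsHermitian) {f : n → ℝ} (hf : ∀ i, 0 ≤ f i) :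
    (conjDiag hA f).PosSemidef := by
  unfold conjDiag
  rw [Matrix.star_eq_conjTranspose]
  exact (Matrix.posSemidef_diagonal_iff.mpr fun i =>
    Complex.zero_le_real.mpr (hf i)).mul_mul_conjTranspose_same _

lemma conjDiag_sub (hA : A.IsHermitian) (f g : n → ℝ) :
    conjDiag hA f - conjDiag hA g = conjDiag hA (fun i => f i - g i) := by
  unfold conjDiag
  rw [← Matrix.sub_mul, ← Matrix.mul_sub, Matrix.diagonal_sub]
  push_cast
  rfl

lemma conjDiag_one (hA : A.IsHermitian) : conjDiag hA (fun _ => 1) = 1 := by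
  unfold conjDiag
  have h : (hA.eigenvectorUnitary : Matrix n n ℂ) * star (hA.eigenvectorUnitary : Matrix n n ℂ) = 1 :=
    mem_unitaryGroup_iff.mp (hA.eigenvectorUnitary).2
  simpa using h

lemma trace_conjDiag (hA : A.IsHermitian) (f : n → ℝ) :
    (conjDiag hA f).trace = ((∑ i, f i : ℝ) : ℂ) := by
  unfold conjDiag
  rw [Matrix.trace_mul_cycle, mem_unitaryGroup_iff'.mp (hA.eigenvectorUnitary).2, one_mul,
    Matrix.trace_diagonal]
  push_cast
  rfl

lemma conjDiag_eigen (hA : A.IsHermitian) : conjDiag hA hA.eigenvalues = A := by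
  conv_rhs => rw [hA.spectral_theorem]
  rfl

lemma traceNorm_eq_sum_abs (hA : A.IsHermitian) :
    traceNorm A = ∑ i, |hA.eigenvalues i| := by
  have habs : conjDiag hA (fun i => |hA.eigenvalues i|) ^ 2 = Aᴴ * A := by
    rw [pow_two, conjDiag_mul, hA.eq]
    have h2 : A * A = conjDiag hA (fun i => hA.eigenvalues i * hA.eigenvalues i) := by
      rw [← conjDiag_mul, conjDiag_eigen]
    rw [h2]
    exact congrArg (conjDiag hA) (funext fun i => abs_mul_abs_self _)
  have hpsd := conjDiag_posSemidef hA (f := fun i => |hA.eigenvalues i|)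
    (fun i => abs_nonneg _)
  have hB := Matrix.posSemidef_conjTranspose_mul_self A
  have hs : hB.1.cfc Real.sqrt = conjDiag hA (fun i => |hA.eigenvalues i|) := by
    rw [← hB.1.cfc_eq, ← cfcₙ_eq_cfc (f := Real.sqrt), ← CFC.sqrt_eq_real_sqrt _ hB.nonneg]
    exact CFC.sqrt_unique (by rw [← pow_two]; exact habs) hpsd.nonneg
  have ht : traceNorm A = (hB.1.cfc Real.sqrt).trace.re := by
    unfold traceNorm Matrix.IsHermitian.cfc
    rfl
  rw [ht, hs, trace_conjDiag]
  simp

/-- Jordan decomposition realizing the trace norm. -/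
lemma jordan (hA : A.IsHermitian) : ∃ P Q : Matrix n n ℂ, P.PosSemidef ∧ Q.PosSemidef ∧
    A = P - Q ∧ traceNorm A = P.trace.re + Q.trace.re := by
  refine ⟨conjDiag hA (fun i => max (hA.eigenvalues i) 0),
          conjDiag hA (fun i => max (-(hA.eigenvalues i)) 0),
          conjDiag_posSemidef hA (fun i => le_max_right _ _),
          conjDiag_posSemidef hA (fun i => le_max_right _ _), ?_, ?_⟩
  · refine (conjDiag_eigen hA).symm.trans ?_
    rw [conjDiag_sub]
    refine congrArg (conjDiag hA) (funext fun i => ?_)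
    rcases le_total 0 (hA.eigenvalues i) with h | h
    · rw [max_eq_left h, max_eq_right (neg_nonpos.mpr h), sub_zero]
    · rw [max_eq_right h, max_eq_left (neg_nonneg.mpr h), zero_sub, neg_neg]
  · rw [traceNorm_eq_sum_abs hA, trace_conjDiag, trace_conjDiag]
    simp only [Complex.ofReal_re]
    rw [← Finset.sum_add_distrib]
    congr 1
    funext i
    rcases le_total 0 (hA.eigenvalues i) with h | h
    · rw [abs_of_nonneg h, max_eq_left h, max_eq_right (neg_nonpos.mpr h), add_zero]
    · rw [abs_of_nonpos h, max_eq_right h, max_eq_left (neg_nonneg.mpr h), zero_add]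

lemma trace_proj_le (hA : A.IsHermitian) {X : Matrix n n ℂ} (hX : X.PosSemidef)
    {f : n → ℝ} (h0 : ∀ i, 0 ≤ f i) (h1 : ∀ i, f i ≤ 1) :
    ((conjDiag hA f * X).trace).re ≤ X.trace.re := by
  have hsplit : X = (1 - conjDiag hA f) * X + conjDiag hA f * X := by
    rw [← Matrix.add_mul]; simp
  have h1m : (1 - conjDiag hA f).PosSemidef := by
    rw [← conjDiag_one hA, conjDiag_sub]
    exact conjDiag_posSemidef hA fun i => by linarith [h1 i]
  have hnn : 0 ≤ (((1 - conjDiag hA f) * X).trace).re := trace_mul_re_nonneg h1m hX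
  calc ((conjDiag hA f * X).trace).re
      ≤ (((1 - conjDiag hA f) * X).trace).re + ((conjDiag hA f * X).trace).re := by linarith
    _ = X.trace.re := by
        rw [← Complex.add_re, ← Matrix.trace_add, ← hsplit]

/-- Trace norm of a difference of PSD matrices is at most the sum of traces. -/
lemma traceNorm_sub_le {P Q : Matrix n n ℂ} (hP : P.PosSemidef) (hQ : Q.PosSemidef) :
    traceNorm (P - Q) ≤ P.trace.re + Q.trace.re := by
  have hA : (P - Q).IsHermitian := hP.1.sub hQ.1
  set lam := hA.eigenvalues with hlam
  -- positive part projector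
  have key : ∀ (f : n → ℝ), (∀ i, 0 ≤ f i) → (∀ i, f i ≤ 1) →
      ((conjDiag hA f * (P - Q)).trace).re = ∑ i, f i * lam i ∧
      ((conjDiag hA f * (P - Q)).trace).re
        = ((conjDiag hA f * P).trace).re - ((conjDiag hA f * Q).trace).re := by
    intro f h0 h1
    constructor
    · have hprod : conjDiag hA f * (P - Q) = conjDiag hA (fun i => f i * lam i) := by
        rw [← conjDiag_mul, conjDiag_eigen]
      rw [hprod, trace_conjDiag]
      simp
    · rw [Matrix.mul_sub]
      rw [Matrix.trace_sub, Complex.sub_re]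
  have habs : traceNorm (P - Q) = ∑ i, |lam i| := traceNorm_eq_sum_abs hA
  -- f⁺ and f⁻
  classical
  set fp : n → ℝ := fun i => if 0 ≤ lam i then 1 else 0 with hfp
  set fm : n → ℝ := fun i => if 0 ≤ lam i then 0 else 1 with hfm
  have hp0 : ∀ i, 0 ≤ fp i := fun i => by by_cases h : 0 ≤ lam i <;> simp [hfp, h]
  have hp1 : ∀ i, fp i ≤ 1 := fun i => by by_cases h : 0 ≤ lam i <;> simp [hfp, h]
  have hm0 : ∀ i, 0 ≤ fm i := fun i => by by_cases h : 0 ≤ lam i <;> simp [hfm, h]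
  have hm1 : ∀ i, fm i ≤ 1 := fun i => by by_cases h : 0 ≤ lam i <;> simp [hfm, h]
  obtain ⟨hpA, hpPQ⟩ := key fp hp0 hp1
  obtain ⟨hmA, hmPQ⟩ := key fm hm0 hm1
  have hposP := conjDiag_posSemidef hA hp0
  have hposM := conjDiag_posSemidef hA hm0
  have e1 : ∑ i, fp i * lam i ≤ P.trace.re := by
    have h1 := trace_mul_re_nonneg hposP hQ
    have h2 := trace_proj_le hA hP hp0 hp1
    rw [← hpA, hpPQ]; linarith
  have e2 : -(∑ i, fm i * lam i) ≤ Q.trace.re := by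
    have h1 := trace_mul_re_nonneg hposM hP
    have h2 := trace_proj_le hA hQ hm0 hm1
    rw [← hmA, hmPQ]; linarith
  have e3 : ∑ i, |lam i| = (∑ i, fp i * lam i) + -(∑ i, fm i * lam i) := by
    rw [← Finset.sum_neg_distrib, ← Finset.sum_add_distrib]
    congr 1
    funext i
    by_cases h : 0 ≤ lam i
    · simp [hfp, hfm, h, abs_of_nonneg h]
    · push_neg at h
      simp [hfp, hfm, not_le.mpr h, abs_of_neg h]
  rw [habs, e3]
  linarith

end CqAux

/-- cq-family version of trace-norm contractivity under positive trace-preserving maps: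
if `N` maps positive cq families to positive cq families and preserves the total trace,
then it does not increase the trace distance functional `∑ c, ‖· c‖₁` on Hermitian
cq families. -/
theorem cq_traceNorm_le_of_positive_tracePreserving
    {C C' d d' : Type*} [Fintype C] [Fintype C']
    [Fintype d] [DecidableEq d] [Fintype d'] [DecidableEq d']
    (N : (C → Matrix d d ℂ) →ₗ[ℂ] (C' → Matrix d' d' ℂ))
    (hpos : ∀ ρ : C → Matrix d d ℂ, (∀ c, (ρ c).PosSemidef) → ∀ c', ((N ρ) c').PosSemidef)
    (htr : ∀ ρ : C → Matrix d d ℂ, ∑ c', ((N ρ) c').trace = ∑ c, (ρ c).trace)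
    (ρ : C → Matrix d d ℂ) (hherm : ∀ c, (ρ c).IsHermitian) :
    ∑ c', traceNorm ((N ρ) c') ≤ ∑ c, traceNorm (ρ c) := by
  choose P Q hP hQ hdecomp heq using fun c => CqAux.jordan (hherm c)
  have hρ : ρ = P - Q := funext hdecomp
  have hN : N ρ = fun c' => (N P) c' - (N Q) c' := by
    rw [hρ, map_sub]; rfl
  calc ∑ c', traceNorm ((N ρ) c')
      ≤ ∑ c', (((N P) c').trace.re + ((N Q) c').trace.re) := by
        refine Finset.sum_le_sum fun c' _ => ?_
        rw [hN]
        exact CqAux.traceNorm_sub_le (hpos P hP c') (hpos Q hQ c')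
    _ = (∑ c', ((N P) c').trace).re + (∑ c', ((N Q) c').trace).re := by
        rw [Complex.re_sum, Complex.re_sum, Finset.sum_add_distrib]
    _ = (∑ c, (P c).trace).re + (∑ c, (Q c).trace).re := by
        rw [htr P, htr Q]
    _ = ∑ c, traceNorm (ρ c) := by
        rw [Complex.re_sum, Complex.re_sum, ← Finset.sum_add_distrib]
        exact Finset.sum_congr rfl fun c _ => (heq c).symm
end

section
/- Fix L : ℕ, a finite type C and a finite dimension type d, and let R be the ideal map on families ρ : K × K × C → Matrix d d ℂ. Let Ω ⊆ C and suppose that for every c ∉ Ω and every (k_A, k_B) ≠ (⊥, ⊥) one has ρ(k_A, k_B, c) = 0. Then: (i) (R ρ)(k_A, k_B, c) = ρ(k_A, k_B, c) for every c ∉ Ω and every (k_A, k_B); and (ii) ∑ over all (k_A, k_B, c) of ‖ρ(k_A, k_B, c) − (R ρ)(k_A, k_B, c)‖₁ equals ∑ over (k_A, k_B) and c ∈ Ω of ‖ρ(k_A, k_B, c) − (R ρ)(k_A, k_B, c)‖₁. -/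
open scoped ComplexOrder

/-- The key alphabet: keys of length `l ≤ L`, i.e. pairs of a length `l : Fin (L+1)`
and a bitstring of that length. -/
abbrev Key (L : ℕ) := Σ l : Fin (L+1), (Fin (l : ℕ) → Bool)

/-- The length of a key. -/
def lenKey {L : ℕ} (k : Key L) : Fin (L+1) := k.1

/-- The unique key of length `0` (the abort symbol `⊥`). -/
def botKey (L : ℕ) : Key L := ⟨0, fun _ => false⟩

/-- The ideal-key weight `w(k_A, k_B)`: `2^(-len k_A)` if the lengths agree and
`k_A = k_B`, `0` if the lengths agree but `k_A ≠ k_B`, and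
`2^(-(len k_A + len k_B))` if the lengths differ. -/
noncomputable def idealWt {L : ℕ} (kA kB : Key L) : ℝ :=
  if lenKey kA = lenKey kB then
    (if kA = kB then (2:ℝ) ^ (-((lenKey kA : ℕ) : ℤ)) else 0)
  else (2:ℝ) ^ (-(((lenKey kA : ℕ) : ℤ) + ((lenKey kB : ℕ) : ℤ)))

/-- The ideal map `R`, acting per value of the additional classical index `c`:
it replaces the key registers by ideal keys, weighting by `idealWt` and summing the
input state over all key pairs with the same pair of lengths. -/
noncomputable def idealMap {L : ℕ} {C d : Type*}
    (ρ : Key L × Key L × C → Matrix d d ℂ) : Key L × Key L × C → Matrix d d ℂ :=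
  fun p => idealWt p.1 p.2.1 •
    ∑ q : Key L × Key L,
      if lenKey q.1 = lenKey p.1 ∧ lenKey q.2 = lenKey p.2.1
        then ρ (q.1, q.2, p.2.2) else 0

lemma key_eq_bot_of_len_eq_zero {L : ℕ} (k : Key L) (hk : lenKey k = 0) : k = botKey L := by
  obtain ⟨l, s⟩ := k
  have hl : l = 0 := hk
  subst hl
  simp only [botKey]
  congr 1
  funext i
  exact absurd i.2 (by simp)

lemma traceNorm_zero {n : Type*} [Fintype n] [DecidableEq n] :
    traceNorm (0 : Matrix n n ℂ) = 0 := by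
  have hev := (Matrix.IsHermitian.eigenvalues_eq_zero_iff
    (Matrix.posSemidef_conjTranspose_mul_self (0 : Matrix n n ℂ)).1).mpr (by simp)
  rw [traceNorm, hev]
  simp

/-- If outside the event `Ω` both parties hold the abort key `⊥`, then (i) the real and
ideal states agree outside `Ω`, and (ii) the real–ideal trace distance reduces to the
partial states on `Ω`. -/
theorem idealMap_eq_off_event_and_traceDist (L : ℕ) (C d : Type*) [Fintype C]
    [Fintype d] [DecidableEq d] (Ω : Set C) [DecidablePred (· ∈ Ω)]
    (ρ : Key L × Key L × C → Matrix d d ℂ)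
    (h : ∀ (kA kB : Key L) (c : C), c ∉ Ω → (kA, kB) ≠ (botKey L, botKey L) →
        ρ (kA, kB, c) = 0) :
    (∀ (kA kB : Key L) (c : C), c ∉ Ω → idealMap ρ (kA, kB, c) = ρ (kA, kB, c)) ∧
    (∑ p : Key L × Key L × C, traceNorm (ρ p - idealMap ρ p) =
      ∑ q : Key L × Key L, ∑ c ∈ Finset.univ.filter (· ∈ Ω),
        traceNorm (ρ (q.1, q.2, c) - idealMap ρ (q.1, q.2, c))) := by
  have main : ∀ (kA kB : Key L) (c : C), c ∉ Ω → idealMap ρ (kA, kB, c) = ρ (kA, kB, c) := by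
    intro kA kB c hc
    by_cases hb : (kA, kB) = (botKey L, botKey L)
    · obtain ⟨h1, h2⟩ := Prod.mk.injEq .. ▸ hb
      subst h1; subst h2
      have hsum : (∑ q : Key L × Key L,
          if lenKey q.1 = lenKey (botKey L) ∧ lenKey q.2 = lenKey (botKey L)
            then ρ (q.1, q.2, c) else 0) = ρ (botKey L, botKey L, c) := by
        rw [Fintype.sum_eq_single (botKey L, botKey L)]
        · simp
        · intro q hq
          rw [if_neg]
          rintro ⟨hq1, hq2⟩
          exact hq (Prod.ext (key_eq_bot_of_len_eq_zero _ hq1)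
            (key_eq_bot_of_len_eq_zero _ hq2))
      simp only [idealMap, hsum, idealWt, if_pos rfl, if_pos rfl]
      norm_num [botKey, lenKey]
    · have hρ : ρ (kA, kB, c) = 0 := h kA kB c hc hb
      have hsum : (∑ q : Key L × Key L,
          if lenKey q.1 = lenKey kA ∧ lenKey q.2 = lenKey kB
            then ρ (q.1, q.2, c) else 0) = 0 := by
        apply Finset.sum_eq_zero
        intro q _
        split_ifs with hq
        · by_cases hqb : (q.1, q.2) = (botKey L, botKey L)
          · obtain ⟨hq1, hq2⟩ := Prod.mk.injEq .. ▸ hqb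
            exfalso
            apply hb
            have h1 : lenKey kA = 0 := by rw [← hq.1, hq1]; rfl
            have h2 : lenKey kB = 0 := by rw [← hq.2, hq2]; rfl
            exact Prod.ext (key_eq_bot_of_len_eq_zero _ h1) (key_eq_bot_of_len_eq_zero _ h2)
          · exact h q.1 q.2 c hc hqb
        · rfl
      simp only [idealMap, hsum, smul_zero, hρ]
  refine ⟨main, ?_⟩
  have hzero : ∀ (q : Key L × Key L) (c : C), c ∉ Ω →
      traceNorm (ρ (q.1, q.2, c) - idealMap ρ (q.1, q.2, c)) = 0 := by
    intro q c hc
    rw [main q.1 q.2 c hc, sub_self, traceNorm_zero]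
  rw [Fintype.sum_prod_type, Fintype.sum_prod_type]
  apply Finset.sum_congr rfl
  intro a _
  rw [Fintype.sum_prod_type]
  apply Finset.sum_congr rfl
  intro b _
  rw [Finset.sum_filter]
  apply Finset.sum_congr rfl
  intro c _
  by_cases hc : c ∈ Ω
  · rw [if_pos hc]
  · rw [if_neg hc, hzero (a, b) c hc]
end

section
/- Fix L : ℕ, finite types C' and finite dimension types d, d'. For each pair (l_A, l_B) ∈ Fin (L+1) × Fin (L+1) let Φ(l_A, l_B) : Matrix d d ℂ →ₗ[ℂ] (C' → Matrix d' d' ℂ) be a linear map, let a, b : C' → Bool, and for c' : C' define f_{c'} : K × K → K × K by f_{c'}(k_A, k_B) = (if a c' then k_A else ⊥, if b c' then k_B else ⊥). Define M on families ρ : K × K → Matrix d d ℂ by (M ρ)(k'_A, k'_B, c') = ∑ over pairs (k_A, k_B) with f_{c'}(k_A, k_B) = (k'_A, k'_B) of Φ(len k_A, len k_B)(ρ(k_A, k_B)) c'. Let R denote the ideal map (acting per c' on the output side). Then M ∘ R = R ∘ M. -/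
open scoped ComplexOrder

/-- The ideal map `R` on families indexed only by the two key registers. -/
noncomputable def idealMapKK {L : ℕ} {d : Type*}
    (ρ : Key L × Key L → Matrix d d ℂ) : Key L × Key L → Matrix d d ℂ :=
  fun p => idealWt p.1 p.2 •
    ∑ q : Key L × Key L,
      if lenKey q.1 = lenKey p.1 ∧ lenKey q.2 = lenKey p.2 then ρ q else 0

/-- The classically controlled key update: conditioned on `c'`, each party's key is
either kept (`a c'` / `b c'` true) or replaced by the abort symbol `⊥`. -/
def keyErase {L : ℕ} {C' : Type*} (a b : C' → Bool) (c' : C')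
    (q : Key L × Key L) : Key L × Key L :=
  (if a c' then q.1 else botKey L, if b c' then q.2 else botKey L)

/-- The composite authentication post-processing channel: a key-length-conditioned
communication channel `Φ` followed by the classically controlled key-erasure update. -/
noncomputable def appMap {L : ℕ} {C' d d' : Type*}
    (Φ : Fin (L+1) × Fin (L+1) → (Matrix d d ℂ →ₗ[ℂ] (C' → Matrix d' d' ℂ)))
    (a b : C' → Bool)
    (ρ : Key L × Key L → Matrix d d ℂ) : Key L × Key L × C' → Matrix d' d' ℂ :=
  fun p => ∑ q : Key L × Key L,
    if keyErase a b p.2.2 q = (p.1, p.2.1)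
      then Φ (lenKey q.1, lenKey q.2) (ρ q) p.2.2 else 0

lemma lenKey_botKey (L : ℕ) : lenKey (botKey L) = 0 := rfl

lemma eq_botKey {L : ℕ} (k : Key L) (h : lenKey k = 0) : k = botKey L := by
  obtain ⟨l, s⟩ := k
  have hl : l = 0 := h
  subst hl
  unfold botKey
  congr 1
  funext i
  exact absurd i.2 (by simp)

lemma idealWt_symm {L : ℕ} (kA kB : Key L) : idealWt kA kB = idealWt kB kA := by
  unfold idealWt
  by_cases h : lenKey kA = lenKey kB
  · rcases eq_or_ne kA kB with h2 | h2
    · subst h2; rfl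
    · rw [if_pos h, if_pos h.symm, if_neg h2, if_neg (Ne.symm h2)]
  · rw [if_neg h, if_neg (fun hh => h hh.symm), neg_add, neg_add, add_comm]

lemma idealWt_bot_right {L : ℕ} (kA : Key L) :
    idealWt kA (botKey L) = (2:ℝ) ^ (-((lenKey kA : ℕ) : ℤ)) := by
  unfold idealWt
  by_cases h : lenKey kA = lenKey (botKey L)
  · have : kA = botKey L := eq_botKey kA h
    simp [h, this]
  · rw [if_neg h]
    simp [lenKey_botKey]

lemma idealWt_bot_bot {L : ℕ} : idealWt (botKey L) (botKey L) = 1 := by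
  simp [idealWt_bot_right, lenKey_botKey]


lemma sum_wt_right {L : ℕ} (kA : Key L) (l : Fin (L+1)) :
    ∑ kB : Key L, (if lenKey kB = l then idealWt kA kB else 0)
      = (2:ℝ) ^ (-((lenKey kA : ℕ) : ℤ)) := by
  rw [← Finset.univ_sigma_univ, Finset.sum_sigma]
  have hsplit : ∀ l' : Fin (L+1),
      (∑ s : Fin (l':ℕ) → Bool, if lenKey (⟨l', s⟩ : Key L) = l then idealWt kA ⟨l', s⟩ else 0)
        = if l' = l then ∑ s : Fin (l':ℕ) → Bool, idealWt kA ⟨l', s⟩ else 0 := by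
    intro l'
    by_cases h : l' = l
    · simp [lenKey, h]
    · simp [lenKey, h]
  rw [Finset.sum_congr rfl (fun l' _ => hsplit l'), Finset.sum_ite_eq' Finset.univ l
    (fun l'' => ∑ s : Fin (l'':ℕ) → Bool, idealWt kA ⟨l'', s⟩), if_pos (Finset.mem_univ l)]
  by_cases h : lenKey kA = l
  · obtain ⟨lA, sA⟩ := kA
    have hl : lA = l := h
    subst hl
    have : ∀ s : Fin (lA:ℕ) → Bool, idealWt (⟨lA, sA⟩ : Key L) ⟨lA, s⟩
        = if sA = s then (2:ℝ) ^ (-((lA : ℕ) : ℤ)) else 0 := by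
      intro s
      unfold idealWt lenKey
      simp only [Sigma.ext_iff, heq_eq_eq]
      simp
    simp only [this]
    rw [Finset.sum_ite_eq Finset.univ sA (fun _ => (2:ℝ) ^ (-((lA : ℕ) : ℤ)))]
    simp [lenKey]
  · have : ∀ s : Fin (l:ℕ) → Bool, idealWt kA ⟨l, s⟩
        = (2:ℝ) ^ (-(((lenKey kA : ℕ) : ℤ) + ((l : ℕ) : ℤ))) := by
      intro s
      unfold idealWt
      have : lenKey (⟨l, s⟩ : Key L) = l := rfl
      rw [this, if_neg h]
    simp only [this, Finset.sum_const, Finset.card_univ]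
    have hcard : Fintype.card (Fin (l:ℕ) → Bool) = 2 ^ (l:ℕ) := by simp
    rw [hcard, nsmul_eq_mul]
    push_cast
    rw [← zpow_natCast (2:ℝ) (l:ℕ), ← zpow_add₀ (by norm_num : (2:ℝ) ≠ 0)]
    ring_nf

lemma idealWt_bot_left {L : ℕ} (kB : Key L) :
    idealWt (botKey L) kB = (2:ℝ) ^ (-((lenKey kB : ℕ) : ℤ)) := by
  rw [idealWt_symm, idealWt_bot_right]

lemma sum_wt_left {L : ℕ} (kB : Key L) (l : Fin (L+1)) :
    ∑ kA : Key L, (if lenKey kA = l then idealWt kA kB else 0)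
      = (2:ℝ) ^ (-((lenKey kB : ℕ) : ℤ)) := by
  simp only [fun kA => idealWt_symm kA kB]
  exact sum_wt_right kB l

lemma sum_wt_both {L : ℕ} (l1 l2 : Fin (L+1)) :
    ∑ r : Key L × Key L,
      (if lenKey r.1 = l1 ∧ lenKey r.2 = l2 then idealWt r.1 r.2 else 0) = 1 := by
  rw [Fintype.sum_prod_type]
  have h1 : ∀ r1 : Key L,
      (∑ r2 : Key L, if lenKey r1 = l1 ∧ lenKey r2 = l2 then idealWt r1 r2 else 0)
        = if lenKey r1 = l1 then idealWt r1 (botKey L) else 0 := by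
    intro r1
    by_cases h : lenKey r1 = l1
    · simp only [h, true_and, if_pos]
      rw [sum_wt_right r1 l2, idealWt_bot_right]
    · simp [h]
  simp only [h1]
  rw [sum_wt_left (botKey L) l1]
  simp [lenKey_botKey]

lemma star {L : ℕ} (α β : Bool) (p q : Key L × Key L) :
    (∑ r : Key L × Key L,
      if ((if α then r.1 else botKey L) = p.1 ∧ (if β then r.2 else botKey L) = p.2)
          ∧ lenKey r.1 = lenKey q.1 ∧ lenKey r.2 = lenKey q.2
        then idealWt r.1 r.2 else 0)
    = idealWt p.1 p.2 *
      (if lenKey (if α then q.1 else botKey L) = lenKey p.1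
          ∧ lenKey (if β then q.2 else botKey L) = lenKey p.2 then 1 else 0) := by
  cases α <;> cases β <;>
    simp only [Bool.false_eq_true, if_false, if_true, lenKey_botKey]
  · -- α = false, β = false
    by_cases hp : p = (botKey L, botKey L)
    · subst hp
      simp only [eq_self_iff_true, and_self, true_and]
      rw [sum_wt_both]
      simp [idealWt_bot_bot, lenKey_botKey]
    · have hLHS : ∀ r : Key L × Key L,
          (if ((botKey L = p.1) ∧ (botKey L = p.2))
              ∧ lenKey r.1 = lenKey q.1 ∧ lenKey r.2 = lenKey q.2
            then idealWt r.1 r.2 else 0) = 0 := by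
        intro r
        rw [if_neg]
        rintro ⟨⟨h1, h2⟩, -⟩
        exact hp (Prod.ext h1.symm h2.symm)
      simp only [hLHS, Finset.sum_const_zero]
      rw [if_neg, mul_zero]
      rintro ⟨h1, h2⟩
      exact hp (Prod.ext (eq_botKey p.1 h1.symm) (eq_botKey p.2 h2.symm))
  · -- α = false, β = true
    by_cases hp : botKey L = p.1 ∧ lenKey q.2 = lenKey p.2
    · obtain ⟨hp1, hp2⟩ := hp
      rw [Fintype.sum_prod_type_right]
      have h1 : ∀ r2 : Key L,
          (∑ r1 : Key L, if ((botKey L = p.1) ∧ (r2 = p.2))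
              ∧ lenKey r1 = lenKey q.1 ∧ lenKey r2 = lenKey q.2
            then idealWt r1 r2 else 0)
          = if r2 = p.2 then (2:ℝ) ^ (-((lenKey p.2 : ℕ) : ℤ)) else 0 := by
        intro r2
        by_cases h : r2 = p.2
        · subst h
          have hc : ∀ r1 : Key L,
              (((botKey L = p.1) ∧ (p.2 = p.2))
                ∧ lenKey r1 = lenKey q.1 ∧ lenKey p.2 = lenKey q.2)
              ↔ (lenKey r1 = lenKey q.1) := by
            intro r1
            exact ⟨fun h => h.2.1, fun h => ⟨⟨hp1, rfl⟩, h, hp2.symm⟩⟩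
          rw [Finset.sum_congr rfl (fun r1 _ => if_congr (hc r1) rfl rfl),
            if_pos rfl]
          exact sum_wt_left p.2 (lenKey q.1)
        · simp [h]
      simp only [h1]
      rw [Finset.sum_ite_eq' Finset.univ p.2, if_pos (Finset.mem_univ _)]
      rw [if_pos ⟨by rw [← hp1]; rfl, hp2⟩, mul_one, ← hp1, idealWt_bot_left]
    · have hLHS : ∀ r : Key L × Key L,
          (if ((botKey L = p.1) ∧ (r.2 = p.2))
              ∧ lenKey r.1 = lenKey q.1 ∧ lenKey r.2 = lenKey q.2
            then idealWt r.1 r.2 else 0) = 0 := by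
        intro r
        rw [if_neg]
        rintro ⟨⟨h1, h2⟩, -, h4⟩
        exact hp ⟨h1, h4.symm.trans (congrArg lenKey h2)⟩
      have hLHS' := Finset.sum_congr rfl (fun r (_ : r ∈ Finset.univ) => hLHS r)
      rw [hLHS', Finset.sum_const_zero, if_neg, mul_zero]
      rintro ⟨h1, h2⟩
      exact hp ⟨(eq_botKey p.1 h1.symm).symm, h2⟩
  · -- α = true, β = false
    by_cases hp : botKey L = p.2 ∧ lenKey q.1 = lenKey p.1
    · obtain ⟨hp2, hp1⟩ := hp
      rw [Fintype.sum_prod_type]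
      have h1 : ∀ r1 : Key L,
          (∑ r2 : Key L, if ((r1 = p.1) ∧ (botKey L = p.2))
              ∧ lenKey r1 = lenKey q.1 ∧ lenKey r2 = lenKey q.2
            then idealWt r1 r2 else 0)
          = if r1 = p.1 then (2:ℝ) ^ (-((lenKey p.1 : ℕ) : ℤ)) else 0 := by
        intro r1
        by_cases h : r1 = p.1
        · subst h
          have hc : ∀ r2 : Key L,
              (((p.1 = p.1) ∧ (botKey L = p.2))
                ∧ lenKey p.1 = lenKey q.1 ∧ lenKey r2 = lenKey q.2)
              ↔ (lenKey r2 = lenKey q.2) := by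
            intro r2
            exact ⟨fun h => h.2.2, fun h => ⟨⟨rfl, hp2⟩, hp1.symm, h⟩⟩
          rw [Finset.sum_congr rfl (fun r2 _ => if_congr (hc r2) rfl rfl),
            if_pos rfl]
          exact sum_wt_right p.1 (lenKey q.2)
        · simp [h]
      simp only [h1]
      rw [Finset.sum_ite_eq' Finset.univ p.1, if_pos (Finset.mem_univ _)]
      rw [if_pos ⟨hp1, by rw [← hp2]; rfl⟩, mul_one, ← hp2, idealWt_bot_right]
    · have hLHS : ∀ r : Key L × Key L,
          (if ((r.1 = p.1) ∧ (botKey L = p.2))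
              ∧ lenKey r.1 = lenKey q.1 ∧ lenKey r.2 = lenKey q.2
            then idealWt r.1 r.2 else 0) = 0 := by
        intro r
        rw [if_neg]
        rintro ⟨⟨h1, h2⟩, h3, -⟩
        exact hp ⟨h2, h3.symm.trans (congrArg lenKey h1)⟩
      have hLHS' := Finset.sum_congr rfl (fun r (_ : r ∈ Finset.univ) => hLHS r)
      rw [hLHS', Finset.sum_const_zero, if_neg, mul_zero]
      rintro ⟨h1, h2⟩
      exact hp ⟨(eq_botKey p.2 h2.symm).symm, h1⟩
  · -- α = true, β = true
    have h1 : ∀ r : Key L × Key L,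
        (if ((r.1 = p.1) ∧ (r.2 = p.2))
            ∧ lenKey r.1 = lenKey q.1 ∧ lenKey r.2 = lenKey q.2
          then idealWt r.1 r.2 else 0)
        = if r = p then (if lenKey q.1 = lenKey p.1 ∧ lenKey q.2 = lenKey p.2
            then idealWt p.1 p.2 else 0) else 0 := by
      intro r
      by_cases h : r = p
      · subst h
        rw [if_pos rfl]
        by_cases h2 : lenKey q.1 = lenKey r.1 ∧ lenKey q.2 = lenKey r.2
        · rw [if_pos h2, if_pos ⟨⟨rfl, rfl⟩, h2.1.symm, h2.2.symm⟩]
        · rw [if_neg h2, if_neg]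
          rintro ⟨-, h3, h4⟩
          exact h2 ⟨h3.symm, h4.symm⟩
      · rw [if_neg h, if_neg]
        rintro ⟨⟨h1', h2'⟩, -⟩
        exact h (Prod.ext h1' h2')
    simp only [h1]
    rw [Finset.sum_ite_eq' Finset.univ p, if_pos (Finset.mem_univ _)]
    rw [mul_ite, mul_one, mul_zero]

lemma star' {L : ℕ} {C' : Type*} (a b : C' → Bool) (c : C') (pk q : Key L × Key L) :
    (∑ r : Key L × Key L,
      if keyErase a b c r = pk ∧ lenKey r.1 = lenKey q.1 ∧ lenKey r.2 = lenKey q.2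
        then idealWt r.1 r.2 else 0)
    = idealWt pk.1 pk.2 *
      (if lenKey (keyErase a b c q).1 = lenKey pk.1
          ∧ lenKey (keyErase a b c q).2 = lenKey pk.2 then 1 else 0) := by
  have hiff : ∀ r : Key L × Key L, (keyErase a b c r = pk) ↔
      ((if a c then r.1 else botKey L) = pk.1 ∧ (if b c then r.2 else botKey L) = pk.2) :=
    fun r => Prod.ext_iff
  calc (∑ r : Key L × Key L,
      if keyErase a b c r = pk ∧ lenKey r.1 = lenKey q.1 ∧ lenKey r.2 = lenKey q.2
        then idealWt r.1 r.2 else 0)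
      = ∑ r : Key L × Key L,
        if ((if a c then r.1 else botKey L) = pk.1 ∧ (if b c then r.2 else botKey L) = pk.2)
            ∧ lenKey r.1 = lenKey q.1 ∧ lenKey r.2 = lenKey q.2
          then idealWt r.1 r.2 else 0 :=
        Finset.sum_congr rfl (fun r _ => if_congr (and_congr_left' (hiff r)) rfl rfl)
    _ = _ := star (a c) (b c) pk q


/-- The composite authentication post-processing channel commutes with the ideal map. -/
theorem appMap_comm_idealMap (L : ℕ) (C' d d' : Type*)
    (Φ : Fin (L+1) × Fin (L+1) → (Matrix d d ℂ →ₗ[ℂ] (C' → Matrix d' d' ℂ)))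
    (a b : C' → Bool)
    (ρ : Key L × Key L → Matrix d d ℂ) :
    appMap Φ a b (idealMapKK ρ) = idealMap (appMap Φ a b ρ) := by
  funext p
  obtain ⟨kA, kB, c⟩ := p
  have hL : appMap Φ a b (idealMapKK ρ) (kA, kB, c)
      = ∑ v : Key L × Key L,
          (idealWt kA kB *
            (if lenKey (keyErase a b c v).1 = lenKey kA
                ∧ lenKey (keyErase a b c v).2 = lenKey kB then 1 else 0))
          • Φ (lenKey v.1, lenKey v.2) (ρ v) c := by
    calc appMap Φ a b (idealMapKK ρ) (kA, kB, c)
        = ∑ u : Key L × Key L,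
            if keyErase a b c u = (kA, kB)
              then Φ (lenKey u.1, lenKey u.2) (idealMapKK ρ u) c else 0 := rfl
      _ = ∑ u : Key L × Key L, ∑ v : Key L × Key L,
            if keyErase a b c u = (kA, kB) ∧ lenKey u.1 = lenKey v.1 ∧ lenKey u.2 = lenKey v.2
              then idealWt u.1 u.2 • Φ (lenKey v.1, lenKey v.2) (ρ v) c else 0 := by
          refine Finset.sum_congr rfl (fun u _ => ?_)
          by_cases hu : keyErase a b c u = (kA, kB)
          · rw [if_pos hu]
            show (Φ (lenKey u.1, lenKey u.2)
                (idealWt u.1 u.2 • ∑ v : Key L × Key L,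
                  if lenKey v.1 = lenKey u.1 ∧ lenKey v.2 = lenKey u.2 then ρ v else 0)) c = _
            rw [LinearMap.map_smul_of_tower, map_sum]
            simp only [Pi.smul_apply, Finset.sum_apply,
              apply_ite (Φ (lenKey u.1, lenKey u.2)), map_zero, ite_apply, Pi.zero_apply]
            rw [Finset.smul_sum]
            refine Finset.sum_congr rfl (fun v _ => ?_)
            rw [smul_ite, smul_zero]
            by_cases hv : lenKey v.1 = lenKey u.1 ∧ lenKey v.2 = lenKey u.2
            · have hpair : (lenKey u.1, lenKey u.2) = (lenKey v.1, lenKey v.2) := by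
                rw [hv.1, hv.2]
              rw [if_pos hv, if_pos ⟨hu, hv.1.symm, hv.2.symm⟩, hpair]
            · rw [if_neg hv, if_neg]
              rintro ⟨-, h1, h2⟩
              exact hv ⟨h1.symm, h2.symm⟩
          · rw [if_neg hu]
            exact (Finset.sum_eq_zero (fun v _ => if_neg (fun h => hu h.1))).symm
      _ = ∑ v : Key L × Key L, ∑ u : Key L × Key L,
            if keyErase a b c u = (kA, kB) ∧ lenKey u.1 = lenKey v.1 ∧ lenKey u.2 = lenKey v.2
              then idealWt u.1 u.2 • Φ (lenKey v.1, lenKey v.2) (ρ v) c else 0 :=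
          Finset.sum_comm
      _ = ∑ v : Key L × Key L,
            (∑ u : Key L × Key L,
              if keyErase a b c u = (kA, kB) ∧ lenKey u.1 = lenKey v.1 ∧ lenKey u.2 = lenKey v.2
                then idealWt u.1 u.2 else 0) • Φ (lenKey v.1, lenKey v.2) (ρ v) c := by
          refine Finset.sum_congr rfl (fun v _ => ?_)
          rw [Finset.sum_smul]
          exact Finset.sum_congr rfl (fun u _ => by rw [ite_smul, zero_smul])
      _ = _ := by
          refine Finset.sum_congr rfl (fun v _ => ?_)
          rw [star' a b c (kA, kB) v]
  have hR : idealMap (appMap Φ a b ρ) (kA, kB, c)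
      = ∑ v : Key L × Key L,
          (idealWt kA kB *
            (if lenKey (keyErase a b c v).1 = lenKey kA
                ∧ lenKey (keyErase a b c v).2 = lenKey kB then 1 else 0))
          • Φ (lenKey v.1, lenKey v.2) (ρ v) c := by
    calc idealMap (appMap Φ a b ρ) (kA, kB, c)
        = idealWt kA kB • ∑ w : Key L × Key L,
            if lenKey w.1 = lenKey kA ∧ lenKey w.2 = lenKey kB
              then ∑ v : Key L × Key L,
                if keyErase a b c v = (w.1, w.2)
                  then Φ (lenKey v.1, lenKey v.2) (ρ v) c else 0
              else 0 := rfl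
      _ = idealWt kA kB • ∑ w : Key L × Key L, ∑ v : Key L × Key L,
            if keyErase a b c v = w ∧ (lenKey w.1 = lenKey kA ∧ lenKey w.2 = lenKey kB)
              then Φ (lenKey v.1, lenKey v.2) (ρ v) c else 0 := by
          congr 1
          refine Finset.sum_congr rfl (fun w _ => ?_)
          by_cases hw : lenKey w.1 = lenKey kA ∧ lenKey w.2 = lenKey kB
          · rw [if_pos hw]
            refine Finset.sum_congr rfl (fun v _ => ?_)
            by_cases hv : keyErase a b c v = w
            · rw [if_pos (show keyErase a b c v = (w.1, w.2) from hv), if_pos ⟨hv, hw⟩]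
            · rw [if_neg (show ¬ keyErase a b c v = (w.1, w.2) from hv),
                if_neg (fun h => hv h.1)]
          · rw [if_neg hw]
            exact (Finset.sum_eq_zero (fun v _ => if_neg (fun h => hw h.2))).symm
      _ = idealWt kA kB • ∑ v : Key L × Key L, ∑ w : Key L × Key L,
            if keyErase a b c v = w ∧ (lenKey w.1 = lenKey kA ∧ lenKey w.2 = lenKey kB)
              then Φ (lenKey v.1, lenKey v.2) (ρ v) c else 0 := by
          rw [Finset.sum_comm]
      _ = idealWt kA kB • ∑ v : Key L × Key L,
            if lenKey (keyErase a b c v).1 = lenKey kA ∧ lenKey (keyErase a b c v).2 = lenKey kB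
              then Φ (lenKey v.1, lenKey v.2) (ρ v) c else 0 := by
          congr 1
          refine Finset.sum_congr rfl (fun v _ => ?_)
          rw [Finset.sum_congr rfl (fun w (_ : w ∈ Finset.univ) =>
              ite_and (keyErase a b c v = w) _ _ _),
            Finset.sum_ite_eq Finset.univ (keyErase a b c v)
              (fun w => if lenKey w.1 = lenKey kA ∧ lenKey w.2 = lenKey kB
                then Φ (lenKey v.1, lenKey v.2) (ρ v) c else 0),
            if_pos (Finset.mem_univ _)]
      _ = _ := by
          rw [Finset.smul_sum]
          refine Finset.sum_congr rfl (fun v _ => ?_)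
          by_cases hv : lenKey (keyErase a b c v).1 = lenKey kA
              ∧ lenKey (keyErase a b c v).2 = lenKey kB
          · rw [if_pos hv, if_pos hv, mul_one]
          · rw [if_neg hv, if_neg hv, mul_zero, smul_zero, zero_smul]
  rw [hL, hR]
end
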